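/- arXiv:2204.01908 — 2 statements merged into one kernel-verified Lean document; each statement's English description precedes it below -/
import Mathlib

section
/- Let sub(G_hex) denote the subdivided hexagonal grid, obtained from the infinite hexagonal grid by subdividing each edge twice (replacing every edge by a path of length three through two new vertices). Then for every integer d ≥ 11 and every vertex u of sub(G_hex), a single firefighter can contain a fire starting at u in the distance-restricted game with parameter d; that is, f_d(sub(G_hex), u) = 1 for all d ≥ 11. -/
/- Distance-restricted firefighter game (Burgess, Marcoux, Pike, arXiv:2204.01908).

At time 0 a fire breaks out at the set `F` of vertices and each firefighter is placed on
(protects) a vertex not in `F`.  At each subsequent time step the fire spreads to every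
unburnt, unprotected neighbour of a burning vertex, and then each firefighter moves to a
vertex at distance at most `d` from its current vertex in the subgraph induced by the
unburnt vertices (i.e. along a walk of length ≤ `d` through unburnt vertices).
Occupied vertices are protected forever.  The fire is contained if the burnt set
stabilizes after finitely many steps. -/

namespace Firefight

variable {V : Type*}

/-- There is a walk in `G` from `u` to `v` of length at most `d` all of whose vertices
(including the endpoints) lie in `S`. -/
def ReachWithin (G : SimpleGraph V) (S : Set V) (d : ℕ) (u v : V) : Prop :=
  ∃ p : G.Walk u v, p.length ≤ d ∧ ∀ x ∈ p.support, x ∈ S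

/-- The set of burnt vertices at each time: `F` is the set initially on fire, and
`prot t` is the set of vertices that are protected when the fire spreads at step `t+1`. -/
def burnt (G : SimpleGraph V) (F : Set V) (prot : ℕ → Set V) : ℕ → Set V
  | 0 => F
  | t + 1 => burnt G F prot t ∪ {v | v ∉ prot t ∧ ∃ w ∈ burnt G F prot t, G.Adj w v}

/-- The set of vertices protected by time `t`: all vertices occupied by some firefighter
at some time `s ≤ t`, where `pos s i` is the vertex occupied by firefighter `i` at time `s`. -/
def protOf {k : ℕ} (pos : ℕ → Fin k → V) (t : ℕ) : Set V :=
  {v | ∃ s ≤ t, ∃ i, pos s i = v}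

/-- `k` firefighters, each moving distance at most `d` per turn within the unburnt subgraph,
can contain a fire starting at `F`, the burnt set stabilizing by time `T`. -/
def CanContainIn (G : SimpleGraph V) (d k : ℕ) (F : Set V) (T : ℕ) : Prop :=
  ∃ pos : ℕ → Fin k → V,
    (∀ i, pos 0 i ∉ F) ∧
    (∀ t i, ReachWithin G (burnt G F (protOf pos) (t + 1))ᶜ d (pos t i) (pos (t + 1) i)) ∧
    ∀ t, burnt G F (protOf pos) t ⊆ burnt G F (protOf pos) T

/-- `k` firefighters, each moving distance at most `d` per turn within the unburnt subgraph,
can contain a fire starting at `F`. -/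
def CanContain (G : SimpleGraph V) (d k : ℕ) (F : Set V) : Prop :=
  ∃ T, CanContainIn G d k F T

/-- The distance-restricted firefighter number `f_d(G,u)`: the least number of firefighters
that can contain a fire starting at `u` in the distance-`d` game. -/
noncomputable def fdNum (G : SimpleGraph V) (d : ℕ) (u : V) : ℕ :=
  sInf {k | CanContain G d k {u}}

/-- The infinite square grid: vertex set `ℤ × ℤ`, with `(a,b)` adjacent to `(c,d)`
iff `|a-c| + |b-d| = 1`. -/
def sqGrid : SimpleGraph (ℤ × ℤ) :=
  SimpleGraph.fromRel (fun p q => |p.1 - q.1| + |p.2 - q.2| = 1)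

/-- The infinite hexagonal grid: vertex set `ℤ × ℤ`, with `(x,y)` adjacent to `(x±1,y)`
for all `x, y`, and `(x,y)` adjacent to `(x,y+1)` exactly when `x + y` is even. -/
def hexGrid : SimpleGraph (ℤ × ℤ) :=
  SimpleGraph.fromRel (fun p q =>
    (p.2 = q.2 ∧ |p.1 - q.1| = 1) ∨ (p.1 = q.1 ∧ Even (p.1 + p.2) ∧ q.2 = p.2 + 1))

/-- The vertex set of a concrete plane model of the twice-subdivided hexagonal grid
`sub(G_hex)`: each vertex `(x,y)` of the hexagonal grid becomes `(3x,3y)`; each horizontal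
edge `(x,y)–(x+1,y)` is replaced by the path `(3x,3y)–(3x+1,3y)–(3x+2,3y)–(3x+3,3y)`; each
vertical edge `(x,y)–(x,y+1)` (present exactly when `x+y` is even) is replaced by the path
`(3x,3y)–(3x,3y+1)–(3x,3y+2)–(3x,3y+3)`.  Thus the vertices are: all points whose second
coordinate is a multiple of `3`, together with the interior points of the vertical paths,
namely points `(a,b)` with `3 ∣ a` and `Even (a/3 + ⌊b/3⌋)`. -/
def subHexVerts : Set (ℤ × ℤ) :=
  {p | (3 ∣ p.2) ∨ (3 ∣ p.1 ∧ Even (p.1 / 3 + Int.fdiv p.2 3))}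

/-- The twice-subdivided hexagonal grid `sub(G_hex)` (every edge of the hexagonal grid
replaced by a path of length three), realized as the subgraph of the square grid induced
by `subHexVerts`. -/
def subHexGrid : SimpleGraph subHexVerts := sqGrid.induce subHexVerts

/-! ### basic lemmas -/

lemma mem_subHex {p : ℤ × ℤ} :
    p ∈ subHexVerts ↔ (p.2 % 3 = 0 ∨ (p.1 % 3 = 0 ∧ (p.1 / 3 + p.2 / 3) % 2 = 0)) := by
  show (3 ∣ p.2) ∨ (3 ∣ p.1 ∧ Even (p.1 / 3 + Int.fdiv p.2 3)) ↔ _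
  rw [Int.fdiv_eq_ediv_of_nonneg _ (by norm_num), Int.even_iff]
  omega

lemma sq_adj {p q : ℤ × ℤ} (h : (p.1 - q.1).natAbs + (p.2 - q.2).natAbs = 1) :
    sqGrid.Adj p q := by
  rw [sqGrid, SimpleGraph.fromRel_adj]
  refine ⟨?_, Or.inl ?_⟩
  · intro he; rw [he] at h; simp at h
  · rw [Int.abs_eq_natAbs, Int.abs_eq_natAbs]; omega

lemma sq_adj_elim {p q : ℤ × ℤ} (h : sqGrid.Adj p q) :
    (p.1 - q.1).natAbs + (p.2 - q.2).natAbs = 1 := by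
  rw [sqGrid, SimpleGraph.fromRel_adj] at h
  obtain ⟨-, h | h⟩ := h <;>
    (rw [Int.abs_eq_natAbs, Int.abs_eq_natAbs] at h; omega)

lemma subHex_adj {p q : subHexVerts} :
    subHexGrid.Adj p q ↔ sqGrid.Adj p.val q.val := by
  rfl

/-! ### the potential function -/

def phi (p : ℤ × ℤ) : ℤ :=
  if p.2 % 3 = 0 then 6 * (p.2 / 3) - min ((p.1 - p.2) % 6) (6 - (p.1 - p.2) % 6)
  else 6 * (p.2 / 3) + p.2 % 3

lemma phi_ge (p : ℤ × ℤ) : 2 * p.2 - 3 ≤ phi p := by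
  unfold phi; split <;> omega

lemma phi_le (p : ℤ × ℤ) : phi p ≤ 2 * p.2 := by
  unfold phi; split <;> omega

lemma phi_lip {p q : ℤ × ℤ} (hp : p ∈ subHexVerts) (hq : q ∈ subHexVerts)
    (h : (p.1 - q.1).natAbs + (p.2 - q.2).natAbs = 1) :
    (phi p - phi q).natAbs ≤ 1 := by
  rw [mem_subHex] at hp hq
  unfold phi
  rcases (by omega :
      (q.1 = p.1 + 1 ∧ q.2 = p.2) ∨ (q.1 = p.1 - 1 ∧ q.2 = p.2) ∨
      (q.2 = p.2 + 1 ∧ q.1 = p.1) ∨ (q.2 = p.2 - 1 ∧ q.1 = p.1)) with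
    (⟨h1, h2⟩ | ⟨h1, h2⟩ | ⟨h1, h2⟩ | ⟨h1, h2⟩) <;>
    rw [h1, h2] <;> split <;> (try split) <;> omega

/-! ### Reach-within machinery -/

lemma mem_row {x y : ℤ} (hy : y % 3 = 0) : (x, y) ∈ subHexVerts := by
  rw [mem_subHex]; left; exact hy

lemma mem_conn {x y : ℤ} (m : ℤ) (hy : y % 3 = 0) (hx : x % 3 = 0)
    (hpar : (x / 3 + y / 3) % 2 = 0) (hm0 : 0 ≤ m) (hm : m ≤ 3) :
    (x, y + m) ∈ subHexVerts := by
  rw [mem_subHex]; simp only []; omega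

def RW (S : Set subHexVerts) (n : ℕ) (p q : ℤ × ℤ) : Prop :=
  ∃ (hp : p ∈ subHexVerts) (hq : q ∈ subHexVerts),
    ReachWithin subHexGrid S n ⟨p, hp⟩ ⟨q, hq⟩

namespace RW

lemma cast {S n p q p' q'} (h : RW S n p q) (hp : p = p') (hq : q = q') :
    RW S n p' q' := hp ▸ hq ▸ h

lemma mono_d {S n m p q} (h : RW S n p q) (hnm : n ≤ m) : RW S m p q := by
  obtain ⟨hp, hq, w, hl, hs⟩ := h
  exact ⟨hp, hq, w, hl.trans hnm, hs⟩

lemma mono_S {S S' : Set subHexVerts} {n p q} (h : RW S n p q) (hs : S ⊆ S') :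
    RW S' n p q := by
  obtain ⟨hp, hq, w, hl, hsup⟩ := h
  exact ⟨hp, hq, w, hl, fun x hx => hs (hsup x hx)⟩

lemma refl {S : Set subHexVerts} {p} (hp : p ∈ subHexVerts)
    (hS : ∀ h : p ∈ subHexVerts, (⟨p, h⟩ : subHexVerts) ∈ S) : RW S 0 p p := by
  refine ⟨hp, hp, SimpleGraph.Walk.nil, by simp, ?_⟩
  intro x hx
  simp only [SimpleGraph.Walk.support_nil, List.mem_singleton] at hx
  subst hx; exact hS hp

lemma step {S : Set subHexVerts} {p q} (hp : p ∈ subHexVerts) (hq : q ∈ subHexVerts)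
    (hadj : (p.1 - q.1).natAbs + (p.2 - q.2).natAbs = 1)
    (hSp : ∀ h : p ∈ subHexVerts, (⟨p, h⟩ : subHexVerts) ∈ S)
    (hSq : ∀ h : q ∈ subHexVerts, (⟨q, h⟩ : subHexVerts) ∈ S) : RW S 1 p q := by
  refine ⟨hp, hq, SimpleGraph.Walk.cons (by rw [subHex_adj]; exact sq_adj hadj)
    SimpleGraph.Walk.nil, by simp, ?_⟩
  intro x hx
  simp only [SimpleGraph.Walk.support_cons, SimpleGraph.Walk.support_nil,
    List.mem_cons, List.mem_singleton] at hx
  rcases hx with h | h | h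
  · subst h; exact hSp hp
  · subst h; exact hSq hq
  · exact absurd h (by simp)

lemma trans {S n m p q r} (h1 : RW S n p q) (h2 : RW S m q r) : RW S (n + m) p r := by
  obtain ⟨hp, hq, w1, hl1, hs1⟩ := h1
  obtain ⟨hq', hr, w2, hl2, hs2⟩ := h2
  refine ⟨hp, hr, w1.append w2, by rw [SimpleGraph.Walk.length_append]; omega, ?_⟩
  intro x hx
  rw [SimpleGraph.Walk.mem_support_append_iff] at hx
  rcases hx with h | h
  · exact hs1 x h
  · exact hs2 x h

lemma symm {S n p q} (h : RW S n p q) : RW S n q p := by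
  obtain ⟨hp, hq, w, hl, hs⟩ := h
  refine ⟨hq, hp, w.reverse, by simpa using hl, ?_⟩
  intro x hx
  rw [SimpleGraph.Walk.support_reverse, List.mem_reverse] at hx
  exact hs x hx

lemma horiz {S : Set subHexVerts} (x y : ℤ) (n : ℕ) (hy : y % 3 = 0)
    (hS : ∀ i : ℕ, i ≤ n → ∀ h : ((x + (i : ℤ), y)) ∈ subHexVerts,
      (⟨(x + (i : ℤ), y), h⟩ : subHexVerts) ∈ S) :
    RW S n (x, y) (x + (n : ℤ), y) := by
  induction n with
  | zero =>
      exact (refl (mem_row hy) (hS 0 le_rfl)).cast (by simp) (by simp)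
  | succ n ih =>
      have h1 : RW S n (x, y) (x + (n : ℤ), y) :=
        ih (fun i hi => hS i (by omega))
      have h2 : RW S 1 (x + (n : ℤ), y) (x + ((n + 1 : ℕ) : ℤ), y) := by
        refine step (mem_row hy) (mem_row hy) (by push_cast; omega)
          (hS n (by omega)) (hS (n + 1) le_rfl)
      exact h1.trans h2

lemma vert {S : Set subHexVerts} (x y : ℤ) (hy : y % 3 = 0) (hx : x % 3 = 0)
    (hpar : (x / 3 + y / 3) % 2 = 0) (i j : ℕ) (hij : i ≤ j) (hj : j ≤ 3)
    (hS : ∀ m : ℕ, m ≤ 3 → ∀ h : ((x, y + (m : ℤ))) ∈ subHexVerts,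
      (⟨(x, y + (m : ℤ)), h⟩ : subHexVerts) ∈ S) :
    RW S (j - i) (x, y + (i : ℤ)) (x, y + (j : ℤ)) := by
  induction j, hij using Nat.le_induction with
  | base =>
      exact (refl (mem_conn i hy hx hpar (by omega) (by exact_mod_cast hj))
        (hS i (by omega))).cast rfl rfl |>.mono_d (by omega)
  | succ j hij ih =>
      have h1 : RW S (j - i) (x, y + (i : ℤ)) (x, y + (j : ℤ)) :=
        ih (by omega)
      have h2 : RW S 1 (x, y + (j : ℤ)) (x, y + ((j + 1 : ℕ) : ℤ)) := by
        refine step (mem_conn j hy hx hpar (by omega) (by push_cast; omega))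
          (by exact_mod_cast mem_conn ((j:ℤ)+1) hy hx hpar (by omega) (by push_cast; omega)) ?_ ?_ ?_
        · push_cast; omega
        · exact hS j (by omega)
        · exact hS (j + 1) (by omega)
      exact (h1.trans h2).cast rfl rfl |>.mono_d (by omega)

end RW

/-! ### generic burnt lemmas -/

section BurntLemmas

variable {G : SimpleGraph V} {F : Set V} {prot : ℕ → Set V}

lemma burnt_succ_subset (t : ℕ) : burnt G F prot t ⊆ burnt G F prot (t + 1) := by
  intro v hv; exact Or.inl hv

lemma burnt_mono {s t : ℕ} (h : s ≤ t) : burnt G F prot s ⊆ burnt G F prot t := by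
  induction t with
  | zero => cases Nat.le_zero.mp h; exact subset_rfl
  | succ t ih =>
      rcases Nat.le_succ_iff.mp h with h' | h'
      · exact (ih h').trans (burnt_succ_subset t)
      · cases h'; exact subset_rfl

lemma burnt_stable (hmono : ∀ s t : ℕ, s ≤ t → prot s ⊆ prot t) {t0 : ℕ}
    (h : burnt G F prot (t0 + 1) ⊆ burnt G F prot t0) :
    ∀ t, t0 ≤ t → burnt G F prot t ⊆ burnt G F prot t0 := by
  intro t ht
  induction t with
  | zero => exact burnt_mono (by omega)
  | succ t ih =>
      rcases Nat.lt_or_ge t0 (t+1) with h' | h'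
      · have ht0t : t0 ≤ t := by omega
        intro v hv
        rcases hv with hv | ⟨hnp, w, hw, hadj⟩
        · exact ih ht0t hv
        · refine h (Or.inr ⟨?_, w, ih ht0t hw, hadj⟩)
          intro hc; exact hnp (hmono t0 t ht0t hc)
      · exact burnt_mono (by omega)

lemma protOf_mono {k : ℕ} (pos : ℕ → Fin k → V) {s t : ℕ} (h : s ≤ t) :
    protOf pos s ⊆ protOf pos t := by
  rintro v ⟨s', hs', i, hi⟩; exact ⟨s', hs'.trans h, i, hi⟩

end BurntLemmas

/-! ### the strategy: constants -/

def AB (a b : ℤ) (p : ℤ × ℤ) : ℤ :=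
  max (((p.1 - a).natAbs + (p.2 - b).natAbs : ℕ) : ℤ) (((phi p - phi (a, b)).natAbs : ℕ) : ℤ)

lemma AB_lip (a b : ℤ) {p q : ℤ × ℤ} (hp : p ∈ subHexVerts) (hq : q ∈ subHexVerts)
    (h : (p.1 - q.1).natAbs + (p.2 - q.2).natAbs = 1) :
    AB a b q ≤ AB a b p + 1 := by
  have h1 := phi_lip hp hq h
  unfold AB; omega

lemma burnt_AB_le {a b : ℤ} (hu : (a, b) ∈ subHexVerts) (prot : ℕ → Set subHexVerts)
    (t : ℕ) : ∀ v ∈ burnt subHexGrid {(⟨(a,b), hu⟩ : subHexVerts)} prot t,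
      AB a b v.val ≤ t := by
  induction t with
  | zero =>
      intro v hv
      rcases hv with rfl
      unfold AB; simp
  | succ t ih =>
      intro v hv
      rcases hv with hv | ⟨-, w, hw, hadj⟩
      · exact (ih v hv).trans (by omega)
      · have h1 := ih w hw
        have h2 := sq_adj_elim (subHex_adj.mp hadj)
        have h3 := AB_lip a b w.property v.property h2
        omega

def kB (b : ℤ) : ℤ := (b - 1802) / 3
def yBo (b : ℤ) : ℤ := 3 * kB b + 2
def kT (b : ℤ) : ℤ := (b + 898) / 3
def yT (b : ℤ) : ℤ := 3 * kT b + 2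
def xR (a : ℤ) : ℤ := 3 * ((a + 660) / 3) + 1
def xL (a : ℤ) : ℤ := 3 * ((a - 1800) / 3) + 1
def xT0 (a b : ℤ) : ℤ := xR a - 1 - ((xR a - 1 - 3 * kT b) % 6)
def xB0 (a b : ℤ) : ℤ := xL a + 1 + ((3 * kB b - xL a - 1) % 6)
def n2 (a b : ℤ) : ℤ := (xT0 a b - xL a - 1) / 6 + 1
def n4 (a b : ℤ) : ℤ := (xR a - 1 - xB0 a b) / 6 + 1
def t2 (a b : ℤ) : ℤ := 899 + n2 a b
def t3 (a b : ℤ) : ℤ := t2 a b + 900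
def t4 (a b : ℤ) : ℤ := t3 a b + n4 a b

lemma facts (a b : ℤ) :
    a + 658 ≤ xR a ∧ xR a ≤ a + 661 ∧ xR a % 3 = 1 ∧
    a - 1802 ≤ xL a ∧ xL a ≤ a - 1799 ∧ xL a % 3 = 1 ∧
    b - 1804 ≤ 3 * kB b ∧ 3 * kB b ≤ b - 1802 ∧
    b + 896 ≤ 3 * kT b ∧ 3 * kT b ≤ b + 898 ∧
    kT b - kB b = 900 ∧
    (xT0 a b - 3 * kT b) % 6 = 0 ∧ xR a - 6 ≤ xT0 a b ∧ xT0 a b ≤ xR a - 1 ∧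
    (xB0 a b - 3 * kB b) % 6 = 0 ∧ xL a + 1 ≤ xB0 a b ∧ xB0 a b ≤ xL a + 6 ∧
    409 ≤ n2 a b ∧ n2 a b ≤ 411 ∧ 409 ≤ n4 a b ∧ n4 a b ≤ 411 ∧
    1 ≤ xT0 a b - 6*(n2 a b - 1) - xL a ∧ xT0 a b - 6*(n2 a b - 1) - xL a ≤ 6 ∧
    xB0 a b + 6*(n4 a b - 1) ≤ xR a - 1 ∧ xR a - 1 ≤ xB0 a b + 6*(n4 a b - 1) + 5 := by
  unfold n2 n4 xT0 xB0 xR xL kB kT; omega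

def stratP (a b : ℤ) : ℤ → ℤ × ℤ := fun t =>
  if t ≤ 899 then (xR a, 3 * (kB b + 1 + t))
  else if t ≤ t2 a b then (xT0 a b - 6 * (t - 900), yT b)
  else if t ≤ t3 a b then (xL a, 3 * (kT b - (t - t2 a b - 1)))
  else if t ≤ t4 a b then (xB0 a b + 6 * (t - t3 a b - 1), yBo b)
  else (xB0 a b + 6 * (n4 a b - 1), yBo b)

lemma memP (a b : ℤ) (t : ℤ) : stratP a b t ∈ subHexVerts := by
  have hf := facts a b
  rw [stratP, mem_subHex]
  split_ifs <;> simp only [yT, yBo] <;> omega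

/-! ### safety -/

def SafeSet (a b : ℤ) (t : ℕ) : Set subHexVerts := {v | (t : ℤ) + 2 ≤ AB a b v.val}

lemma safe_not_burnt {a b : ℤ} (hu : (a, b) ∈ subHexVerts) (prot : ℕ → Set subHexVerts)
    (t : ℕ) : SafeSet a b t ⊆ (burnt subHexGrid {(⟨(a,b),hu⟩ : subHexVerts)} prot (t+1))ᶜ := by
  intro v hv hb
  have h1 := burnt_AB_le hu prot (t+1) v hb
  simp only [SafeSet, Set.mem_setOf_eq] at hv
  push_cast at h1
  omega

lemma pe {x y x' y' : ℤ} (h1 : x = x') (h2 : y = y') : ((x, y) : ℤ × ℤ) = (x', y') := by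
  subst h1; subst h2; rfl

section Safety

variable (a b : ℤ) (t : ℕ)

lemma safe1 (ht : (t:ℤ) ≤ 899) (w : ℤ × ℤ)
    (h1 : xR a - 1 ≤ w.1) (h2 : w.1 ≤ xR a + 2)
    (h3 : 3*(kB b + 1 + (t:ℤ)) ≤ w.2) (h4 : w.2 ≤ 3*(kB b + 1 + (t:ℤ)) + 3) :
    ∀ hm : w ∈ subHexVerts, (⟨w, hm⟩ : subHexVerts) ∈ SafeSet a b t := by
  intro hm
  have hf := facts a b
  simp only [SafeSet, Set.mem_setOf_eq, AB]
  omega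

lemma safe2 (ht : (t:ℤ) ≤ t2 a b) (w : ℤ × ℤ)
    (h3 : 3 * kT b ≤ w.2) (h4 : w.2 ≤ yT b + 1) :
    ∀ hm : w ∈ subHexVerts, (⟨w, hm⟩ : subHexVerts) ∈ SafeSet a b t := by
  intro hm
  have hf := facts a b
  have p1 := phi_ge w; have p2 := phi_le w
  have p3 := phi_ge (a, b); have p4 := phi_le (a, b)
  simp only [SafeSet, Set.mem_setOf_eq, AB]
  simp only [yT, t2] at *
  omega

lemma safe3 (ht1 : t2 a b < (t:ℤ)) (ht : (t:ℤ) ≤ t3 a b) (w : ℤ × ℤ)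
    (h1 : xL a - 1 ≤ w.1) (h2 : w.1 ≤ xL a + 2)
    (h3 : 3*(kT b - ((t:ℤ) - t2 a b - 1)) - 3 ≤ w.2)
    (h4 : w.2 ≤ 3*(kT b - ((t:ℤ) - t2 a b - 1))) :
    ∀ hm : w ∈ subHexVerts, (⟨w, hm⟩ : subHexVerts) ∈ SafeSet a b t := by
  intro hm
  have hf := facts a b
  simp only [SafeSet, Set.mem_setOf_eq, AB]
  simp only [t3, t2] at *
  omega

lemma safe4 (ht : (t:ℤ) ≤ t4 a b) (w : ℤ × ℤ)
    (h3 : 3 * kB b ≤ w.2) (h4 : w.2 ≤ 3 * kB b + 3) :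
    ∀ hm : w ∈ subHexVerts, (⟨w, hm⟩ : subHexVerts) ∈ SafeSet a b t := by
  intro hm
  have hf := facts a b
  have p1 := phi_ge w; have p2 := phi_le w
  have p3 := phi_ge (a, b); have p4 := phi_le (a, b)
  simp only [SafeSet, Set.mem_setOf_eq, AB]
  simp only [yBo, t4, t3, t2] at *
  omega

end Safety


/-! ### the hops -/

section Hops

variable (a b : ℤ) (t : ℕ)

lemma hopA (ht : (t:ℤ) ≤ 898) :
    RW (SafeSet a b t) 11 (xR a, 3*(kB b + 1 + (t:ℤ))) (xR a, 3*(kB b + 1 + (t:ℤ)) + 3) := by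
  have hf := facts a b
  set y : ℤ := 3*(kB b + 1 + (t:ℤ)) with hy
  have hy3 : y % 3 = 0 := by omega
  have hS1 : ∀ (i : ℕ), i ≤ 2 → ∀ h : ((xR a - 1 + (i:ℤ), y)) ∈ subHexVerts,
      (⟨(xR a - 1 + (i:ℤ), y), h⟩ : subHexVerts) ∈ SafeSet a b t := by
    intro i hi hm
    exact safe1 a b t (by omega) _ (by omega) (by omega) (by omega) (by omega) hm
  have hS2 : ∀ (i : ℕ), i ≤ 2 → ∀ h : ((xR a - 1 + (i:ℤ), y + 3)) ∈ subHexVerts,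
      (⟨(xR a - 1 + (i:ℤ), y + 3), h⟩ : subHexVerts) ∈ SafeSet a b t := by
    intro i hi hm
    exact safe1 a b t (by omega) _ (by omega) (by omega) (by omega) (by omega) hm
  rcases em ((xR a - 1 - y) % 6 = 0) with hc | hc
  · have r1 : RW (SafeSet a b t) 1 (xR a, y) (xR a - 1, y) := by
      refine RW.symm ((RW.horiz (xR a - 1) y 1 hy3 ?_).cast rfl (pe (by push_cast; omega) rfl))
      intro i hi hm; exact hS1 i (by omega) hm
    have r2 : RW (SafeSet a b t) 3 (xR a - 1, y) (xR a - 1, y + 3) := by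
      refine (RW.vert (xR a - 1) y hy3 (by omega) (by omega) 0 3 (by omega) (by omega) ?_).cast
        (pe rfl (by push_cast; omega)) (pe rfl (by push_cast; omega))
      intro m hm h
      exact safe1 a b t (by omega) _ (by omega) (by omega) (by omega) (by omega) h
    have r3 : RW (SafeSet a b t) 1 (xR a - 1, y + 3) (xR a, y + 3) := by
      refine (RW.horiz (xR a - 1) (y + 3) 1 (by omega) ?_).cast rfl (pe (by push_cast; omega) rfl)
      intro i hi hm; exact hS2 i (by omega) hm
    exact ((r1.trans r2).trans r3).mono_d (by omega)
  · have hc' : (xR a + 2 - y) % 6 = 0 := by omega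
    have r1 : RW (SafeSet a b t) 2 (xR a, y) (xR a + 2, y) := by
      refine (RW.horiz (xR a) y 2 hy3 ?_).cast rfl (pe (by push_cast; omega) rfl)
      intro i hi hm
      exact safe1 a b t (by omega) _ (by omega) (by omega) (by omega) (by omega) hm
    have r2 : RW (SafeSet a b t) 3 (xR a + 2, y) (xR a + 2, y + 3) := by
      refine (RW.vert (xR a + 2) y hy3 (by omega) (by omega) 0 3 (by omega) (by omega) ?_).cast
        (pe rfl (by push_cast; omega)) (pe rfl (by push_cast; omega))
      intro m hm h
      exact safe1 a b t (by omega) _ (by omega) (by omega) (by omega) (by omega) h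
    have r3 : RW (SafeSet a b t) 2 (xR a + 2, y + 3) (xR a, y + 3) := by
      refine RW.symm ((RW.horiz (xR a) (y + 3) 2 (by omega) ?_).cast rfl
        (pe (by push_cast; omega) rfl))
      intro i hi hm
      exact safe1 a b t (by omega) _ (by omega) (by omega) (by omega) (by omega) hm
    exact ((r1.trans r2).trans r3).mono_d (by omega)

lemma hopB (ht : (t:ℤ) = 899) :
    RW (SafeSet a b t) 11 (xR a, 3 * kT b) (xT0 a b, yT b) := by
  have hf := facts a b
  have ht2 : t2 a b = 899 + n2 a b := rfl
  set n : ℕ := (xR a - xT0 a b).toNat with hn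
  have r1 : RW (SafeSet a b t) n (xR a, 3 * kT b) (xT0 a b, 3 * kT b) := by
    refine RW.symm ((RW.horiz (xT0 a b) (3 * kT b) n (by omega) ?_).cast rfl
      (pe (by omega) rfl))
    intro i hi hm
    exact safe2 a b t (by omega) _ (by omega) (by simp only [yT]; omega) hm
  have r2 : RW (SafeSet a b t) 2 (xT0 a b, 3 * kT b) (xT0 a b, yT b) := by
    refine (RW.vert (xT0 a b) (3 * kT b) (by omega) (by omega) (by omega) 0 2 (by omega)
      (by omega) ?_).cast (pe rfl (by push_cast; omega)) (pe rfl (by simp only [yT]; push_cast; omega))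
    intro m hm h
    exact safe2 a b t (by omega) _ (by omega) (by simp only [yT]; omega) h
  exact (r1.trans r2).mono_d (by omega)

lemma hopC (ht1 : 900 ≤ (t:ℤ)) (ht : (t:ℤ) ≤ t2 a b - 1) :
    RW (SafeSet a b t) 11 (xT0 a b - 6*((t:ℤ) - 900), yT b)
      (xT0 a b - 6*((t:ℤ) + 1 - 900), yT b) := by
  have hf := facts a b
  have ht2 : t2 a b = 899 + n2 a b := rfl
  set x : ℤ := xT0 a b - 6*((t:ℤ) - 900) with hx
  have hx6 : (x - 3 * kT b) % 6 = 0 := by omega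
  have hS : ∀ (i : ℕ), i ≤ 6 → ∀ h : ((x - 6 + (i:ℤ), 3 * kT b + 3)) ∈ subHexVerts,
      (⟨(x - 6 + (i:ℤ), 3 * kT b + 3), h⟩ : subHexVerts) ∈ SafeSet a b t := by
    intro i hi hm
    exact safe2 a b t (by omega) _ (by omega) (by simp only [yT]; omega) hm
  have r1 : RW (SafeSet a b t) 1 (x, yT b) (x, 3 * kT b + 3) := by
    refine (RW.vert x (3 * kT b) (by omega) (by omega) (by omega) 2 3 (by omega)
      (by omega) ?_).cast (pe rfl (by simp only [yT]; push_cast; omega))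
      (pe rfl (by push_cast; omega))
    intro m hm h
    exact safe2 a b t (by omega) _ (by omega) (by simp only [yT]; omega) h
  have r2 : RW (SafeSet a b t) 6 (x, 3 * kT b + 3) (x - 6, 3 * kT b + 3) := by
    refine RW.symm ((RW.horiz (x - 6) (3 * kT b + 3) 6 (by omega) hS).cast rfl
      (pe (by push_cast; omega) rfl))
  have r3 : RW (SafeSet a b t) 1 (x - 6, 3 * kT b + 3) (xT0 a b - 6*((t:ℤ) + 1 - 900), yT b) := by
    refine RW.symm ((RW.vert (x - 6) (3 * kT b) (by omega) (by omega) (by omega) 2 3 (by omega)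
      (by omega) ?_).cast (pe (by omega) (by simp only [yT]; push_cast; omega))
      (pe (by omega) (by push_cast; omega)))
    intro m hm h
    exact safe2 a b t (by omega) _ (by omega) (by simp only [yT]; omega) h
  exact ((r1.trans r2).trans r3).mono_d (by omega)

lemma hopD (ht : (t:ℤ) = t2 a b) :
    RW (SafeSet a b t) 11 (xT0 a b - 6*((t:ℤ) - 900), yT b) (xL a, 3 * kT b) := by
  have hf := facts a b
  have ht2 : t2 a b = 899 + n2 a b := rfl
  set x : ℤ := xT0 a b - 6*((t:ℤ) - 900) with hx
  have hx' : x = xT0 a b - 6*(n2 a b - 1) := by omega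
  have hx6 : (x - 3 * kT b) % 6 = 0 := by omega
  set n : ℕ := (x - xL a).toNat with hn
  have r1 : RW (SafeSet a b t) 2 (x, yT b) (x, 3 * kT b) := by
    refine RW.symm ((RW.vert x (3 * kT b) (by omega) (by omega) (by omega) 0 2 (by omega)
      (by omega) ?_).cast (pe rfl (by push_cast; omega))
      (pe rfl (by simp only [yT]; push_cast; omega)))
    intro m hm h
    exact safe2 a b t (by omega) _ (by omega) (by simp only [yT]; omega) h
  have r2 : RW (SafeSet a b t) n (x, 3 * kT b) (xL a, 3 * kT b) := by
    refine RW.symm ((RW.horiz (xL a) (3 * kT b) n (by omega) ?_).cast rfl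
      (pe (by omega) rfl))
    intro i hi hm
    exact safe2 a b t (by omega) _ (by omega) (by simp only [yT]; omega) hm
  exact (r1.trans r2).mono_d (by omega)

lemma hopE (ht1 : t2 a b < (t:ℤ)) (ht : (t:ℤ) ≤ t3 a b - 1) :
    RW (SafeSet a b t) 11 (xL a, 3*(kT b - ((t:ℤ) - t2 a b - 1)))
      (xL a, 3*(kT b - ((t:ℤ) + 1 - t2 a b - 1))) := by
  have hf := facts a b
  have ht2 : t2 a b = 899 + n2 a b := rfl
  have ht3 : t3 a b = t2 a b + 900 := rfl
  set y : ℤ := 3*(kT b - ((t:ℤ) - t2 a b - 1)) with hy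
  have hy3 : y % 3 = 0 := by omega
  have hgoal : 3*(kT b - ((t:ℤ) + 1 - t2 a b - 1)) = y - 3 := by omega
  rw [hgoal]
  have hS1 : ∀ (i : ℕ), i ≤ 2 → ∀ h : ((xL a - 1 + (i:ℤ), y)) ∈ subHexVerts,
      (⟨(xL a - 1 + (i:ℤ), y), h⟩ : subHexVerts) ∈ SafeSet a b t := by
    intro i hi hm
    exact safe3 a b t (by omega) (by omega) _ (by omega) (by omega) (by omega) (by omega) hm
  have hS2 : ∀ (i : ℕ), i ≤ 2 → ∀ h : ((xL a - 1 + (i:ℤ), y - 3)) ∈ subHexVerts,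
      (⟨(xL a - 1 + (i:ℤ), y - 3), h⟩ : subHexVerts) ∈ SafeSet a b t := by
    intro i hi hm
    exact safe3 a b t (by omega) (by omega) _ (by omega) (by omega) (by omega) (by omega) hm
  rcases em ((xL a - 1 - (y - 3)) % 6 = 0) with hc | hc
  · have r1 : RW (SafeSet a b t) 1 (xL a, y) (xL a - 1, y) := by
      refine RW.symm ((RW.horiz (xL a - 1) y 1 hy3 ?_).cast rfl (pe (by push_cast; omega) rfl))
      intro i hi hm; exact hS1 i (by omega) hm
    have r2 : RW (SafeSet a b t) 3 (xL a - 1, y) (xL a - 1, y - 3) := by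
      refine RW.symm ((RW.vert (xL a - 1) (y - 3) (by omega) (by omega) (by omega) 0 3 (by omega)
        (by omega) ?_).cast (pe rfl (by push_cast; omega)) (pe rfl (by push_cast; omega)))
      intro m hm h
      exact safe3 a b t (by omega) (by omega) _ (by omega) (by omega) (by omega) (by omega) h
    have r3 : RW (SafeSet a b t) 1 (xL a - 1, y - 3) (xL a, y - 3) := by
      refine (RW.horiz (xL a - 1) (y - 3) 1 (by omega) ?_).cast rfl (pe (by push_cast; omega) rfl)
      intro i hi hm; exact hS2 i (by omega) hm
    exact ((r1.trans r2).trans r3).mono_d (by omega)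
  · have hc' : (xL a + 2 - (y - 3)) % 6 = 0 := by omega
    have r1 : RW (SafeSet a b t) 2 (xL a, y) (xL a + 2, y) := by
      refine (RW.horiz (xL a) y 2 hy3 ?_).cast rfl (pe (by push_cast; omega) rfl)
      intro i hi hm
      exact safe3 a b t (by omega) (by omega) _ (by omega) (by omega) (by omega) (by omega) hm
    have r2 : RW (SafeSet a b t) 3 (xL a + 2, y) (xL a + 2, y - 3) := by
      refine RW.symm ((RW.vert (xL a + 2) (y - 3) (by omega) (by omega) (by omega) 0 3 (by omega)
        (by omega) ?_).cast (pe rfl (by push_cast; omega)) (pe rfl (by push_cast; omega)))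
      intro m hm h
      exact safe3 a b t (by omega) (by omega) _ (by omega) (by omega) (by omega) (by omega) h
    have r3 : RW (SafeSet a b t) 2 (xL a + 2, y - 3) (xL a, y - 3) := by
      refine RW.symm ((RW.horiz (xL a) (y - 3) 2 (by omega) ?_).cast rfl
        (pe (by push_cast; omega) rfl))
      intro i hi hm
      exact safe3 a b t (by omega) (by omega) _ (by omega) (by omega) (by omega) (by omega) hm
    exact ((r1.trans r2).trans r3).mono_d (by omega)

lemma hopF (ht : (t:ℤ) = t3 a b) :
    RW (SafeSet a b t) 11 (xL a, yBo b + 1) (xB0 a b, yBo b) := by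
  have hf := facts a b
  have ht2 : t2 a b = 899 + n2 a b := rfl
  have ht3 : t3 a b = t2 a b + 900 := rfl
  have ht4 : t4 a b = t3 a b + n4 a b := rfl
  set n : ℕ := (xB0 a b - xL a).toNat with hn
  have r1 : RW (SafeSet a b t) n (xL a, yBo b + 1) (xB0 a b, yBo b + 1) := by
    refine (RW.horiz (xL a) (yBo b + 1) n (by simp only [yBo]; omega) ?_).cast rfl
      (pe (by omega) rfl)
    intro i hi hm
    exact safe4 a b t (by omega) _ (by simp only [yBo]; omega) (by simp only [yBo]; omega) hm
  have r2 : RW (SafeSet a b t) 1 (xB0 a b, yBo b + 1) (xB0 a b, yBo b) := by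
    refine RW.symm ((RW.vert (xB0 a b) (3 * kB b) (by omega) (by omega) (by omega) 2 3 (by omega)
      (by omega) ?_).cast (pe rfl (by simp only [yBo]; push_cast; omega))
      (pe rfl (by simp only [yBo]; push_cast; omega)))
    intro m hm h
    exact safe4 a b t (by omega) _ (by omega) (by omega) h
  exact (r1.trans r2).mono_d (by omega)

lemma hopG (ht1 : t3 a b < (t:ℤ)) (ht : (t:ℤ) ≤ t4 a b - 1) :
    RW (SafeSet a b t) 11 (xB0 a b + 6*((t:ℤ) - t3 a b - 1), yBo b)
      (xB0 a b + 6*((t:ℤ) + 1 - t3 a b - 1), yBo b) := by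
  have hf := facts a b
  set x : ℤ := xB0 a b + 6*((t:ℤ) - t3 a b - 1) with hx
  have hx6 : (x - 3 * kB b) % 6 = 0 := by omega
  have r1 : RW (SafeSet a b t) 1 (x, yBo b) (x, yBo b + 1) := by
    refine (RW.vert x (3 * kB b) (by omega) (by omega) (by omega) 2 3 (by omega)
      (by omega) ?_).cast (pe rfl (by simp only [yBo]; push_cast; omega))
      (pe rfl (by simp only [yBo]; push_cast; omega))
    intro m hm h
    exact safe4 a b t (by omega) _ (by omega) (by omega) h
  have r2 : RW (SafeSet a b t) 6 (x, yBo b + 1) (x + 6, yBo b + 1) := by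
    refine (RW.horiz x (yBo b + 1) 6 (by simp only [yBo]; omega) ?_).cast rfl
      (pe (by push_cast; omega) rfl)
    intro i hi hm
    exact safe4 a b t (by omega) _ (by simp only [yBo]; omega) (by simp only [yBo]; omega) hm
  have r3 : RW (SafeSet a b t) 1 (x + 6, yBo b + 1) (xB0 a b + 6*((t:ℤ) + 1 - t3 a b - 1), yBo b) := by
    refine RW.symm ((RW.vert (x + 6) (3 * kB b) (by omega) (by omega) (by omega) 2 3 (by omega)
      (by omega) ?_).cast (pe (by omega) (by simp only [yBo]; push_cast; omega))
      (pe (by omega) (by simp only [yBo]; push_cast; omega)))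
    intro m hm h
    exact safe4 a b t (by omega) _ (by omega) (by omega) h
  exact ((r1.trans r2).trans r3).mono_d (by omega)

lemma hop (hlt : (t:ℤ) < t4 a b) :
    RW (SafeSet a b t) 11 (stratP a b (t:ℤ)) (stratP a b ((t:ℤ)+1)) := by
  have hf := facts a b
  have ht2 : t2 a b = 899 + n2 a b := rfl
  have ht3 : t3 a b = t2 a b + 900 := rfl
  have ht4 : t4 a b = t3 a b + n4 a b := rfl
  by_cases h1 : (t:ℤ) ≤ 898
  · have e1 : stratP a b (t:ℤ) = (xR a, 3*(kB b + 1 + (t:ℤ))) := by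
      simp only [stratP]; rw [if_pos (by omega)]
    have e2 : stratP a b ((t:ℤ)+1) = (xR a, 3*(kB b + 1 + ((t:ℤ)+1))) := by
      simp only [stratP]; rw [if_pos (by omega)]
    rw [e1, e2]
    exact (hopA a b t h1).cast rfl (pe rfl (by omega))
  by_cases h2 : (t:ℤ) = 899
  · have e1 : stratP a b (t:ℤ) = (xR a, 3*(kB b + 1 + (t:ℤ))) := by
      simp only [stratP]; rw [if_pos (by omega)]
    have e2 : stratP a b ((t:ℤ)+1) = (xT0 a b - 6*(((t:ℤ)+1) - 900), yT b) := by
      simp only [stratP]; rw [if_neg (by omega), if_pos (by omega)]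
    rw [e1, e2]
    exact (hopB a b t h2).cast (pe rfl (by omega)) (pe (by omega) rfl)
  by_cases h3 : (t:ℤ) ≤ t2 a b - 1
  · have e1 : stratP a b (t:ℤ) = (xT0 a b - 6*((t:ℤ) - 900), yT b) := by
      simp only [stratP]; rw [if_neg (by omega), if_pos (by omega)]
    have e2 : stratP a b ((t:ℤ)+1) = (xT0 a b - 6*(((t:ℤ)+1) - 900), yT b) := by
      simp only [stratP]; rw [if_neg (by omega), if_pos (by omega)]
    rw [e1, e2]
    exact (hopC a b t (by omega) h3).cast rfl (pe (by omega) rfl)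
  by_cases h4 : (t:ℤ) = t2 a b
  · have e1 : stratP a b (t:ℤ) = (xT0 a b - 6*((t:ℤ) - 900), yT b) := by
      simp only [stratP]; rw [if_neg (by omega), if_pos (by omega)]
    have e2 : stratP a b ((t:ℤ)+1) = (xL a, 3*(kT b - (((t:ℤ)+1) - t2 a b - 1))) := by
      simp only [stratP]; rw [if_neg (by omega), if_neg (by omega), if_pos (by omega)]
    rw [e1, e2]
    exact (hopD a b t h4).cast rfl (pe rfl (by omega))
  by_cases h5 : (t:ℤ) ≤ t3 a b - 1
  · have e1 : stratP a b (t:ℤ) = (xL a, 3*(kT b - ((t:ℤ) - t2 a b - 1))) := by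
      simp only [stratP]; rw [if_neg (by omega), if_neg (by omega), if_pos (by omega)]
    have e2 : stratP a b ((t:ℤ)+1) = (xL a, 3*(kT b - (((t:ℤ)+1) - t2 a b - 1))) := by
      simp only [stratP]; rw [if_neg (by omega), if_neg (by omega), if_pos (by omega)]
    rw [e1, e2]
    exact hopE a b t (by omega) h5
  by_cases h6 : (t:ℤ) = t3 a b
  · have e1 : stratP a b (t:ℤ) = (xL a, 3*(kT b - ((t:ℤ) - t2 a b - 1))) := by
      simp only [stratP]; rw [if_neg (by omega), if_neg (by omega), if_pos (by omega)]
    have e2 : stratP a b ((t:ℤ)+1) = (xB0 a b + 6*(((t:ℤ)+1) - t3 a b - 1), yBo b) := by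
      simp only [stratP]
      rw [if_neg (by omega), if_neg (by omega), if_neg (by omega), if_pos (by omega)]
    rw [e1, e2]
    refine (hopF a b t h6).cast (pe rfl ?_) (pe (by omega) rfl)
    simp only [yBo]; omega
  · have e1 : stratP a b (t:ℤ) = (xB0 a b + 6*((t:ℤ) - t3 a b - 1), yBo b) := by
      simp only [stratP]
      rw [if_neg (by omega), if_neg (by omega), if_neg (by omega), if_pos (by omega)]
    have e2 : stratP a b ((t:ℤ)+1) = (xB0 a b + 6*(((t:ℤ)+1) - t3 a b - 1), yBo b) := by
      simp only [stratP]
      rw [if_neg (by omega), if_neg (by omega), if_neg (by omega), if_pos (by omega)]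
    rw [e1, e2]
    exact hopG a b t (by omega) (by omega)

end Hops


/-! ### assembling the strategy -/

section Assemble

variable (a b : ℤ) (hu : (a, b) ∈ subHexVerts)

def pos1 : ℕ → Fin 1 → subHexVerts := fun t _ => ⟨stratP a b (t:ℤ), memP a b (t:ℤ)⟩

lemma stratP_late (s : ℤ) (hs : t4 a b ≤ s) :
    stratP a b s = (xB0 a b + 6*(n4 a b - 1), yBo b) := by
  have hf := facts a b
  have ht2 : t2 a b = 899 + n2 a b := rfl
  have ht3 : t3 a b = t2 a b + 900 := rfl
  have ht4 : t4 a b = t3 a b + n4 a b := rfl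
  simp only [stratP]
  split_ifs with c1 c2 c3 c4
  · omega
  · omega
  · omega
  · exact pe (by omega) rfl
  · rfl

lemma v4_mem : (xB0 a b + 6*(n4 a b - 1), yBo b) ∈ subHexVerts := by
  have h := memP a b (t4 a b)
  rwa [stratP_late a b (t4 a b) le_rfl] at h

lemma frame_protected (v : subHexVerts)
    (hfr : v.val.1 = xR a ∨ v.val.1 = xL a ∨ v.val.2 = yT b ∨ v.val.2 = yBo b)
    (hb1 : xL a ≤ v.val.1) (hb2 : v.val.1 ≤ xR a)
    (hb3 : yBo b ≤ v.val.2) (hb4 : v.val.2 ≤ yT b) :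
    ∃ s : ℕ, stratP a b (s:ℤ) = v.val ∧ (s:ℤ) + 10 ≤ AB a b v.val := by
  have hf := facts a b
  have ht2 : t2 a b = 899 + n2 a b := rfl
  have ht3 : t3 a b = t2 a b + 900 := rfl
  have ht4 : t4 a b = t3 a b + n4 a b := rfl
  have hm := mem_subHex.mp v.property
  have p1 := phi_ge v.val; have p2 := phi_le v.val
  have p3 := phi_ge (a, b); have p4 := phi_le (a, b)
  simp only [yT, yBo] at *
  rcases hfr with hx | hx | hy | hy
  · -- right side
    have hy3 : v.val.2 % 3 = 0 := by omega
    refine ⟨(v.val.2 / 3 - (kB b + 1)).toNat, ?_, ?_⟩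
    · show stratP a b _ = ((v.val.1, v.val.2) : ℤ × ℤ)
      simp only [stratP]; rw [if_pos (by omega)]
      exact pe (by omega) (by first | omega | (simp only [yT, yBo]; omega))
    · simp only [AB]; omega
  · -- left side
    have hy3 : v.val.2 % 3 = 0 := by omega
    refine ⟨(t2 a b + 1 + kT b - v.val.2 / 3).toNat, ?_, ?_⟩
    · show stratP a b _ = ((v.val.1, v.val.2) : ℤ × ℤ)
      simp only [stratP]
      rw [if_neg (by omega), if_neg (by omega), if_pos (by omega)]
      exact pe (by omega) (by first | omega | (simp only [yT, yBo]; omega))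
    · simp only [AB]; omega
  · -- top
    have hx3 : v.val.1 % 3 = 0 ∧ (v.val.1 / 3 + v.val.2 / 3) % 2 = 0 := by omega
    have hx6 : (v.val.1 - 3 * kT b) % 6 = 0 := by omega
    refine ⟨(900 + (xT0 a b - v.val.1) / 6).toNat, ?_, ?_⟩
    · show stratP a b _ = ((v.val.1, v.val.2) : ℤ × ℤ)
      simp only [stratP]
      rw [if_neg (by omega), if_pos (by omega)]
      exact pe (by omega) (by first | omega | (simp only [yT, yBo]; omega))
    · simp only [AB]; omega
  · -- bottom
    have hx3 : v.val.1 % 3 = 0 ∧ (v.val.1 / 3 + v.val.2 / 3) % 2 = 0 := by omega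
    have hx6 : (v.val.1 - 3 * kB b) % 6 = 0 := by omega
    refine ⟨(t3 a b + 1 + (v.val.1 - xB0 a b) / 6).toNat, ?_, ?_⟩
    · show stratP a b _ = ((v.val.1, v.val.2) : ℤ × ℤ)
      simp only [stratP]
      rw [if_neg (by omega), if_neg (by omega), if_neg (by omega), if_pos (by omega)]
      exact pe (by omega) (by first | omega | (simp only [yT, yBo]; omega))
    · simp only [AB]; omega

lemma burnt_in_box (t : ℕ) :
    ∀ v ∈ burnt subHexGrid {(⟨(a,b), hu⟩ : subHexVerts)} (protOf (pos1 a b)) t,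
      xL a < v.val.1 ∧ v.val.1 < xR a ∧ yBo b < v.val.2 ∧ v.val.2 < yT b := by
  have hf := facts a b
  induction t with
  | zero =>
      rintro v rfl
      simp only [yT, yBo]; omega
  | succ t ih =>
      rintro v (hv | ⟨hnp, w, hw, hadj⟩)
      · exact ih v hv
      · have hwb := ih w hw
        have hd := sq_adj_elim (subHex_adj.mp hadj)
        by_contra hout
        have hfr : (v.val.1 = xR a ∨ v.val.1 = xL a ∨ v.val.2 = yT b ∨ v.val.2 = yBo b) ∧
            xL a ≤ v.val.1 ∧ v.val.1 ≤ xR a ∧ yBo b ≤ v.val.2 ∧ v.val.2 ≤ yT b := by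
          constructor
          · omega
          · omega
        obtain ⟨s, hs, hAB⟩ := frame_protected a b v hfr.1 hfr.2.1 hfr.2.2.1 hfr.2.2.2.1
          hfr.2.2.2.2
        have hABw := burnt_AB_le hu (protOf (pos1 a b)) t w hw
        have hABv := AB_lip a b w.property v.property hd
        refine hnp ⟨s, ?_, ⟨0, by omega⟩, Subtype.ext hs⟩
        have : (s:ℤ) ≤ (t:ℤ) := by omega
        exact_mod_cast this

lemma v4_never (t : ℕ) :
    (⟨(xB0 a b + 6*(n4 a b - 1), yBo b), v4_mem a b⟩ : subHexVerts) ∉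
      burnt subHexGrid {(⟨(a,b), hu⟩ : subHexVerts)} (protOf (pos1 a b)) t := by
  have hf := facts a b
  have ht2 : t2 a b = 899 + n2 a b := rfl
  have ht3 : t3 a b = t2 a b + 900 := rfl
  have ht4 : t4 a b = t3 a b + n4 a b := rfl
  induction t with
  | zero =>
      intro hv
      have h2 : ((xB0 a b + 6*(n4 a b - 1), yBo b) : ℤ × ℤ) = (a, b) :=
        congrArg Subtype.val hv
      have := congrArg Prod.snd h2
      simp only [yBo] at this
      omega
  | succ t ih =>
      rintro (hv | ⟨hnp, w, hw, hadj⟩)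
      · exact ih hv
      · by_cases hl : t4 a b ≤ (t:ℤ)
        · refine hnp ⟨(t4 a b).toNat, ?_, ⟨0, by omega⟩,
            Subtype.ext (show stratP a b (((t4 a b).toNat : ℕ) : ℤ) = _ from by
              rw [show (((t4 a b).toNat : ℕ) : ℤ) = t4 a b by omega,
                stratP_late a b _ le_rfl])⟩
          have : ((t4 a b).toNat : ℤ) ≤ (t : ℤ) := by omega
          exact_mod_cast this
        · have hABw := burnt_AB_le hu (protOf (pos1 a b)) t w hw
          have hd := sq_adj_elim (subHex_adj.mp hadj)
          have hABv := AB_lip a b w.property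
            (v4_mem a b) hd
          have p1 := phi_le (xB0 a b + 6*(n4 a b - 1), yBo b)
          have p3 := phi_ge (a, b)
          simp only [AB, yBo] at hABv hABw p1 p3 ⊢
          omega

lemma canContain_one (d : ℕ) (hd : 11 ≤ d) :
    CanContain subHexGrid d 1 {(⟨(a,b), hu⟩ : subHexVerts)} := by
  have hf := facts a b
  have ht2 : t2 a b = 899 + n2 a b := rfl
  have ht3 : t3 a b = t2 a b + 900 := rfl
  have ht4 : t4 a b = t3 a b + n4 a b := rfl
  -- the burnt sets are contained in a finite box, hence stabilize
  set F : Set subHexVerts := {(⟨(a,b), hu⟩ : subHexVerts)} with hF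
  set prot := protOf (pos1 a b) with hprot
  have hsubK : ∀ t, burnt subHexGrid F prot t ⊆
      Subtype.val ⁻¹' ((Set.Icc (xL a) (xR a)) ×ˢ (Set.Icc (yBo b) (yT b))) := by
    intro t v hv
    have := burnt_in_box a b hu t v hv
    simp only [Set.mem_preimage, Set.mem_prod, Set.mem_Icc]
    omega
  have hKfin : (Subtype.val ⁻¹'
      ((Set.Icc (xL a) (xR a)) ×ˢ (Set.Icc (yBo b) (yT b))) : Set subHexVerts).Finite :=
    Set.Finite.preimage (fun x _ y _ h => Subtype.val_injective h)
      ((Set.finite_Icc _ _).prod (Set.finite_Icc _ _))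
  have hfin : ∀ t, (burnt subHexGrid F prot t).Finite := fun t => hKfin.subset (hsubK t)
  have hstab : ∃ t0 : ℕ, burnt subHexGrid F prot (t0 + 1) ⊆ burnt subHexGrid F prot t0 := by
    by_contra hc
    push_neg at hc
    have hss : ∀ t, burnt subHexGrid F prot t ⊂ burnt subHexGrid F prot (t+1) := by
      intro t
      rw [Set.ssubset_def]
      exact ⟨burnt_succ_subset t, hc t⟩
    have grow : ∀ t : ℕ, t ≤ (burnt subHexGrid F prot t).ncard := by
      intro t
      induction t with
      | zero => omega
      | succ t ih =>
          have := Set.ncard_lt_ncard (hss t) (hfin (t+1))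
          omega
    set M := (Subtype.val ⁻¹'
      ((Set.Icc (xL a) (xR a)) ×ˢ (Set.Icc (yBo b) (yT b))) : Set subHexVerts).ncard with hM
    have h1 := grow (M + 1)
    have h2 := Set.ncard_le_ncard (hsubK (M+1)) hKfin
    omega
  obtain ⟨t0, hstab0⟩ := hstab
  refine ⟨t0, pos1 a b, ?_, ?_, ?_⟩
  · intro i hi
    have h2 : stratP a b ((0:ℕ):ℤ) = ((a, b) : ℤ × ℤ) := congrArg Subtype.val hi
    have h3 : stratP a b ((0:ℕ):ℤ) = (xR a, 3*(kB b + 1 + ((0:ℕ):ℤ))) := by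
      simp only [stratP]; rw [if_pos (by norm_num)]
    rw [h3] at h2
    have := congrArg Prod.fst h2
    simp only at this
    omega
  · intro t i
    rcases lt_or_ge (t:ℤ) (t4 a b) with hlt | hge
    · have h := (hop a b t hlt).cast rfl (by rw [show ((t:ℤ)+1) = (((t+1:ℕ)):ℤ) by push_cast; ring])
      have h2 := (h.mono_S (safe_not_burnt hu prot t)).mono_d hd
      obtain ⟨hp, hq, hr⟩ := h2
      exact hr
    · have hval : pos1 a b (t+1) i = pos1 a b t i := by
        apply Subtype.ext
        simp only [pos1]
        rw [stratP_late a b _ (by push_cast; omega), stratP_late a b _ (by omega)]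
      rw [hval]
      refine ⟨SimpleGraph.Walk.nil, by simp, ?_⟩
      intro x hx
      simp only [SimpleGraph.Walk.support_nil, List.mem_singleton] at hx
      subst hx
      intro hb
      have : pos1 a b t i = (⟨(xB0 a b + 6*(n4 a b - 1), yBo b), v4_mem a b⟩ : subHexVerts) :=
        Subtype.ext (by simp only [pos1]; rw [stratP_late a b _ (by omega)])
      rw [this] at hb
      exact v4_never a b hu (t+1) hb
  · intro t
    rcases le_or_gt t t0 with h | h
    · exact burnt_mono h
    · exact burnt_stable (fun s t hst => protOf_mono _ hst) hstab0 t (by omega)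

end Assemble


/-! ### zero firefighters cannot contain -/

lemma not_zero (a b : ℤ) (hu : (a, b) ∈ subHexVerts) (d : ℕ) :
    ¬ CanContain subHexGrid d 0 {(⟨(a,b), hu⟩ : subHexVerts)} := by
  rintro ⟨T, pos, -, -, hcont⟩
  set prot := protOf pos with hprotdef
  have hpe : ∀ (t : ℕ) (v : subHexVerts), v ∉ prot t := by
    rintro t v ⟨s, hs, i, hi⟩; exact i.elim0
  set y0 : ℤ := b - b % 3 with hy0
  have hy03 : y0 % 3 = 0 := by omega
  have hmem0 : (a, y0) ∈ subHexVerts := mem_row (by omega)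
  have humem := mem_subHex.mp hu
  have hstart : (⟨(a, y0), hmem0⟩ : subHexVerts) ∈
      burnt subHexGrid {(⟨(a,b), hu⟩ : subHexVerts)} prot 2 := by
    have h3 : b % 3 = 0 ∨ b % 3 = 1 ∨ b % 3 = 2 := by omega
    rcases h3 with h3 | h3 | h3
    · have he : (⟨(a, y0), hmem0⟩ : subHexVerts) = ⟨(a,b), hu⟩ :=
        Subtype.ext (pe rfl (by omega))
      rw [he]
      exact burnt_mono (show 0 ≤ 2 by omega) rfl
    · refine burnt_mono (show 1 ≤ 2 by omega) (Or.inr ⟨hpe 0 _, ⟨(a,b), hu⟩, rfl, ?_⟩)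
      exact subHex_adj.mpr (sq_adj (show (a - a).natAbs + (b - y0).natAbs = 1 by omega))
    · have hw1 : (a, y0 + 1) ∈ subHexVerts := by
        rw [mem_subHex]; omega
      have hb1 : (⟨(a, y0 + 1), hw1⟩ : subHexVerts) ∈
          burnt subHexGrid {(⟨(a,b), hu⟩ : subHexVerts)} prot 1 :=
        Or.inr ⟨hpe 0 _, ⟨(a,b), hu⟩, rfl, subHex_adj.mpr (sq_adj
          (show (a - a).natAbs + (b - (y0+1)).natAbs = 1 by omega))⟩
      exact Or.inr ⟨hpe 1 _, _, hb1, subHex_adj.mpr (sq_adj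
        (show (a - a).natAbs + ((y0+1) - y0).natAbs = 1 by omega))⟩
  have chain : ∀ i : ℕ, (⟨(a + (i:ℤ), y0), mem_row hy03⟩ : subHexVerts) ∈
      burnt subHexGrid {(⟨(a,b), hu⟩ : subHexVerts)} prot (2 + i) := by
    intro i
    induction i with
    | zero =>
        have he : (⟨(a + ((0:ℕ):ℤ), y0), mem_row hy03⟩ : subHexVerts) = ⟨(a, y0), hmem0⟩ :=
          Subtype.ext (pe (by push_cast; ring) rfl)
        rw [he]; exact hstart
    | succ i ih =>
        exact Or.inr ⟨hpe (2+i) _, _, ih, subHex_adj.mpr (sq_adj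
          (show ((a + (i:ℤ)) - (a + ((i+1:ℕ):ℤ))).natAbs + (y0 - y0).natAbs = 1 by
            push_cast; omega))⟩
  have hvT := hcont (2 + (T + 3)) (chain (T + 3))
  have hAB := burnt_AB_le hu prot T _ hvT
  simp only [AB] at hAB
  omega


/-- For every integer `d ≥ 11` and every vertex `u` of the twice-subdivided hexagonal
grid, a single firefighter can contain a fire starting at `u` in the distance-restricted
game with parameter `d`: `f_d(sub(G_hex), u) = 1` for all `d ≥ 11`. -/
theorem subdivided_hex_one_firefighter :
    ∀ d : ℕ, 11 ≤ d → ∀ u : subHexVerts, fdNum subHexGrid d u = 1 := by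
  intro d hd u
  obtain ⟨⟨a, b⟩, hu⟩ := u
  have h1 : CanContain subHexGrid d 1 {(⟨(a,b), hu⟩ : subHexVerts)} :=
    canContain_one a b hu d hd
  have h0 := not_zero a b hu d
  rw [fdNum]
  have hne : {k | CanContain subHexGrid d k {(⟨(a,b), hu⟩ : subHexVerts)}}.Nonempty := ⟨1, h1⟩
  have hmem := Nat.sInf_mem hne
  have hle : sInf {k | CanContain subHexGrid d k {(⟨(a,b), hu⟩ : subHexVerts)}} ≤ 1 :=
    Nat.sInf_le h1
  rcases Nat.lt_or_ge (sInf {k | CanContain subHexGrid d k {(⟨(a,b), hu⟩ : subHexVerts)}}) 1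
    with h | h
  · exfalso
    have hz : sInf {k | CanContain subHexGrid d k {(⟨(a,b), hu⟩ : subHexVerts)}} = 0 := by omega
    rw [hz] at hmem
    exact h0 hmem
  · omega

end Firefight
end

section
/- Let m ≥ 3 and let W_m be the graph obtained from the Cartesian product of a one-way infinite ray P_{0,∞} and the cycle C_m by adding a new hub vertex u adjacent to all m vertices of the cycle at the end of the ray (so that end cycle together with u forms a wheel on m+1 vertices). Then for every integer d ≥ 1, a single firefighter can contain a fire starting at u in the distance-restricted game with parameter d; that is, f_d(W_m, u) = 1 for all d ≥ 1. -/
/- Distance-restricted firefighter game (Burgess, Marcoux, Pike, arXiv:2204.01908).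

At time 0 a fire breaks out at the set `F` of vertices and each firefighter is placed on
(protects) a vertex not in `F`.  At each subsequent time step the fire spreads to every
unburnt, unprotected neighbour of a burning vertex, and then each firefighter moves to a
vertex at distance at most `d` from its current vertex in the subgraph induced by the
unburnt vertices (i.e. along a walk of length ≤ `d` through unburnt vertices).
Occupied vertices are protected forever.  The fire is contained if the burnt set
stabilizes after finitely many steps. -/

namespace Firefight

variable {V : Type*}

/-- The cycle on `m` vertices (for `m ≥ 3`): vertex set `ZMod m`, `i` adjacent to `i ± 1`. -/
def cycleGraph (m : ℕ) : SimpleGraph (ZMod m) :=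
  SimpleGraph.fromRel (fun i j => j = i + 1)

/-- The one-way infinite ray `P_{0,∞}`: vertices `0,1,2,…` with edges between consecutive
integers. -/
def rayGraph : SimpleGraph ℕ :=
  SimpleGraph.fromRel (fun i j => j = i + 1)

/-- The graph `W_m`: the Cartesian product `P_{0,∞} □ C_m` of the one-way infinite ray and
the `m`-cycle, together with a new hub vertex (`none`) adjacent to all `m` vertices of the
cycle at the end (ray-coordinate `0`) of the ray, so that end cycle together with the hub
forms a wheel on `m+1` vertices. -/
def wheelRay (m : ℕ) : SimpleGraph (Option (ℕ × ZMod m)) :=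
  SimpleGraph.fromRel (fun p q =>
    (∃ a b : ℕ × ZMod m, p = some a ∧ q = some b ∧ (rayGraph.boxProd (cycleGraph m)).Adj a b) ∨
    (p = none ∧ ∃ i : ZMod m, q = some (0, i)))

-- ############ auxiliary development ############

/-- The "rank" of a vertex: hub has rank 0, a vertex at layer `n` has rank `n+1`. -/
def rk {m : ℕ} : Option (ℕ × ZMod m) → ℕ
  | none => 0
  | some p => p.1 + 1

lemma burnt_succ (G : SimpleGraph V) (F : Set V) (prot : ℕ → Set V) (t : ℕ) :
    burnt G F prot (t + 1)
      = burnt G F prot t ∪ {v | v ∉ prot t ∧ ∃ w ∈ burnt G F prot t, G.Adj w v} := rfl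

lemma burnt_le (G : SimpleGraph V) (F : Set V) (prot : ℕ → Set V) {s t : ℕ} (h : s ≤ t) :
    burnt G F prot s ⊆ burnt G F prot t := by
  induction t, h using Nat.le_induction with
  | base => exact subset_rfl
  | succ n hn ih => exact ih.trans (by rw [burnt_succ]; exact Set.subset_union_left)

lemma ray_adj {x y : ℕ} (h : rayGraph.Adj x y) : y = x + 1 ∨ x = y + 1 := by
  rw [rayGraph, SimpleGraph.fromRel_adj] at h; tauto

lemma cycle_adj {m : ℕ} {i j : ZMod m} (hne : i ≠ j) (hj : j = i + 1) :
    (cycleGraph m).Adj i j := by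
  rw [cycleGraph, SimpleGraph.fromRel_adj]
  exact ⟨hne, Or.inl hj⟩

lemma adj_elim {m : ℕ} {p q : Option (ℕ × ZMod m)} (h : (wheelRay m).Adj p q) :
    (p = none ∧ ∃ i, q = some (0, i)) ∨
    (q = none ∧ ∃ i, p = some (0, i)) ∨
    (∃ n i j, p = some (n, i) ∧ q = some (n, j)) ∨
    (∃ n i, (p = some (n, i) ∧ q = some (n + 1, i)) ∨
            (q = some (n, i) ∧ p = some (n + 1, i))) := by
  rw [wheelRay, SimpleGraph.fromRel_adj] at h
  obtain ⟨-, h | h⟩ := h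
  · rcases h with ⟨⟨a1, a2⟩, ⟨b1, b2⟩, hp, hq, hab⟩ | ⟨hp, i, hq⟩
    · rw [SimpleGraph.boxProd_adj] at hab
      rcases hab with ⟨hr, h2⟩ | ⟨hc, h1⟩
      · cases h2
        rcases ray_adj hr with hh | hh
        · cases hh; exact Or.inr (Or.inr (Or.inr ⟨a1, a2, Or.inl ⟨hp, hq⟩⟩))
        · cases hh; exact Or.inr (Or.inr (Or.inr ⟨b1, a2, Or.inr ⟨hq, hp⟩⟩))
      · cases h1
        exact Or.inr (Or.inr (Or.inl ⟨a1, a2, b2, hp, hq⟩))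
    · exact Or.inl ⟨hp, i, hq⟩
  · rcases h with ⟨⟨a1, a2⟩, ⟨b1, b2⟩, hq, hp, hab⟩ | ⟨hq, i, hp⟩
    · rw [SimpleGraph.boxProd_adj] at hab
      rcases hab with ⟨hr, h2⟩ | ⟨hc, h1⟩
      · cases h2
        rcases ray_adj hr with hh | hh
        · cases hh; exact Or.inr (Or.inr (Or.inr ⟨a1, a2, Or.inr ⟨hq, hp⟩⟩))
        · cases hh; exact Or.inr (Or.inr (Or.inr ⟨b1, a2, Or.inl ⟨hp, hq⟩⟩))
      · cases h1
        exact Or.inr (Or.inr (Or.inl ⟨a1, b2, a2, hp, hq⟩))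
    · exact Or.inr (Or.inl ⟨hq, i, hp⟩)

lemma rk_le_of_adj {m : ℕ} {p q : Option (ℕ × ZMod m)} (h : (wheelRay m).Adj p q) :
    rk q ≤ rk p + 1 := by
  rcases adj_elim h with ⟨hp, i, hq⟩ | ⟨hq, -⟩ | ⟨n, i, j, hp, hq⟩ | ⟨n, i, ⟨hp, hq⟩ | ⟨hq, hp⟩⟩ <;>
    subst_vars <;> simp [rk]

lemma adj_hub {m : ℕ} (i : ZMod m) : (wheelRay m).Adj none (some (0, i)) := by
  rw [wheelRay, SimpleGraph.fromRel_adj]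
  exact ⟨by simp, Or.inl (Or.inr ⟨rfl, i, rfl⟩)⟩

lemma adj_up {m : ℕ} (n : ℕ) (i : ZMod m) :
    (wheelRay m).Adj (some (n, i)) (some (n + 1, i)) := by
  rw [wheelRay, SimpleGraph.fromRel_adj]
  refine ⟨by simp, Or.inl (Or.inl ⟨(n, i), (n + 1, i), rfl, rfl, ?_⟩)⟩
  rw [SimpleGraph.boxProd_adj]
  exact Or.inl ⟨by rw [rayGraph, SimpleGraph.fromRel_adj]; exact ⟨by omega, Or.inl rfl⟩, rfl⟩

lemma adj_cyc {m : ℕ} {i j : ZMod m} (hne : i ≠ j) (hj : j = i + 1) (n : ℕ) :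
    (wheelRay m).Adj (some (n, i)) (some (n, j)) := by
  rw [wheelRay, SimpleGraph.fromRel_adj]
  refine ⟨by simp [hne], Or.inl (Or.inl ⟨(n, i), (n, j), rfl, rfl, ?_⟩)⟩
  rw [SimpleGraph.boxProd_adj]
  exact Or.inr ⟨cycle_adj hne hj, rfl⟩

lemma burnt_rank {m : ℕ} (prot : ℕ → Set (Option (ℕ × ZMod m))) :
    ∀ t, ∀ v ∈ burnt (wheelRay m) {none} prot t, rk v ≤ t := by
  intro t
  induction t with
  | zero =>
    intro v hv
    have : v = none := hv
    simp [this, rk]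
  | succ n ih =>
    intro v hv
    rw [burnt_succ] at hv
    rcases hv with hv | ⟨-, w, hw, hadj⟩
    · exact (ih v hv).trans (Nat.le_succ n)
    · exact (rk_le_of_adj hadj).trans (by have := ih w hw; omega)

lemma burnt_lower {m : ℕ} (prot : ℕ → Set (Option (ℕ × ZMod m))) (N : ℕ)
    (hprot : ∀ t n (i : ZMod m), n < N → some (n, i) ∉ prot t) :
    ∀ n, n < N → ∀ i, some (n, i) ∈ burnt (wheelRay m) {none} prot (n + 1) := by
  intro n
  induction n with
  | zero =>
    intro h i
    rw [burnt_succ]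
    exact Or.inr ⟨hprot 0 0 i h, none, rfl, adj_hub i⟩
  | succ n ih =>
    intro h i
    rw [burnt_succ]
    exact Or.inr ⟨hprot (n + 1) (n + 1) i h, some (n, i), ih (by omega) i, adj_up n i⟩


/-- For `m ≥ 3` and every integer `d ≥ 1`, a single firefighter can contain a fire starting
at the hub `u` of `W_m` in the distance-restricted game with parameter `d`:
`f_d(W_m, u) = 1` for all `d ≥ 1`. -/
theorem layered_wheel_one_firefighter :
    ∀ m : ℕ, 3 ≤ m → ∀ d : ℕ, 1 ≤ d →
      fdNum (wheelRay m) d (none : Option (ℕ × ZMod m)) = 1 := by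
  intro m hm d hd
  haveI : NeZero m := ⟨by omega⟩
  haveI : Fact (1 < m) := ⟨by omega⟩
  -- one firefighter suffices
  have h1 : CanContain (wheelRay m) d 1 ({none} : Set (Option (ℕ × ZMod m))) := by
    refine ⟨m, ?_⟩
    set pos : ℕ → Fin 1 → Option (ℕ × ZMod m) :=
      fun t _ => some (m, ((min t (m - 1) : ℕ) : ZMod m)) with hpos
    -- the burnt set always stays in the region of rank ≤ m
    have key : ∀ t, ∀ v ∈ burnt (wheelRay m) {none} (protOf pos) t, rk v ≤ m := by
      intro t
      induction t with
      | zero =>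
        intro v hv
        have hv' : v = none := hv
        simp [hv', rk]
      | succ n ih =>
        intro v hv
        rw [burnt_succ] at hv
        rcases hv with hv | ⟨hvp, w, hw, hadj⟩
        · exact ih v hv
        · have hw' := ih w hw
          rcases adj_elim hadj with ⟨hwn, i, hv0⟩ | ⟨hvn, -⟩ | ⟨k, i, j, hw2, hv2⟩ |
            ⟨k, i, ⟨hw2, hv2⟩ | ⟨hv2, hw2⟩⟩
          · subst hv0; simp [rk]; omega
          · subst hvn; simp [rk]
          · subst hw2; subst hv2; simpa [rk] using hw'
          · -- upward spread
            subst hw2; subst hv2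
            simp only [rk] at hw' ⊢
            rcases Nat.lt_or_ge (k + 1) m with hlt | hge
            · omega
            · have hkm : k + 1 = m := by omega
              -- then n ≥ m, so the whole protective ring is built: contradiction
              have hn : m ≤ n := by
                have := burnt_rank (protOf pos) n _ hw
                simp only [rk] at this; omega
              exfalso
              apply hvp
              have hvlt : i.val < m := ZMod.val_lt i
              refine ⟨i.val, by omega, 0, ?_⟩
              show some ((m : ℕ), ((min i.val (m - 1) : ℕ) : ZMod m)) = some (k + 1, i)
              rw [Nat.min_eq_left (by omega)]
              simp [ZMod.natCast_val, ZMod.cast_id, hkm]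
          · subst hw2; subst hv2
            simp only [rk] at hw' ⊢
            omega
    have hsafe : ∀ (j : ZMod m) (s : ℕ),
        some ((m : ℕ), j) ∉ burnt (wheelRay m) {none} (protOf pos) s := by
      intro j s hmem
      have := key s _ hmem
      simp [rk] at this
    refine ⟨pos, ?_, ?_, ?_⟩
    · intro i
      simp [hpos]
    · -- movement
      intro t i
      rcases Nat.lt_or_ge t (m - 1) with ht | ht
      · -- move one step around the ring
        have e1 : pos t i = some ((m : ℕ), ((t : ℕ) : ZMod m)) := by
          simp [hpos, Nat.min_eq_left (by omega : t ≤ m - 1)]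
        have e2 : pos (t + 1) i = some ((m : ℕ), ((t + 1 : ℕ) : ZMod m)) := by
          simp [hpos, Nat.min_eq_left (by omega : t + 1 ≤ m - 1)]
        rw [e1, e2]
        have hne : ((t : ℕ) : ZMod m) ≠ ((t + 1 : ℕ) : ZMod m) := by
          intro hcontra
          push_cast at hcontra
          have : (1 : ZMod m) = 0 := by
            have := left_eq_add.mp hcontra
            exact this
          exact one_ne_zero this
        have hj : ((t + 1 : ℕ) : ZMod m) = ((t : ℕ) : ZMod m) + 1 := by push_cast; ring
        refine ⟨SimpleGraph.Walk.cons (adj_cyc hne hj m) SimpleGraph.Walk.nil, by simp; omega, ?_⟩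
        intro x hx
        simp [SimpleGraph.Walk.support] at hx
        rcases hx with hx | hx <;> subst hx <;> exact hsafe _ _
      · -- stay put
        have e : pos (t + 1) i = pos t i := by
          simp [hpos, Nat.min_eq_right (by omega : m - 1 ≤ t),
            Nat.min_eq_right (by omega : m - 1 ≤ t + 1)]
        rw [e]
        refine ⟨SimpleGraph.Walk.nil, by simp, ?_⟩
        intro x hx
        simp [SimpleGraph.Walk.support] at hx
        subst hx
        have e1 : pos t i = some ((m : ℕ), ((min t (m - 1) : ℕ) : ZMod m)) := by simp [hpos]
        rw [e1]
        exact hsafe _ _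
    · -- containment by time m
      intro t v hv
      have hv' := key t v hv
      match v with
      | none =>
        exact burnt_le _ _ _ (Nat.zero_le m) rfl
      | some (n, j) =>
        simp only [rk] at hv'
        have hn : n < m := by omega
        refine burnt_le _ _ _ (by omega : n + 1 ≤ m) ?_
        refine burnt_lower (protOf pos) m ?_ n hn j
        rintro s k i hk ⟨s', -, i', hi'⟩
        simp only [hpos] at hi'
        have : (m : ℕ) = k := by
          have := Option.some.inj hi'
          exact congrArg Prod.fst this
        omega
  -- zero firefighters do not suffice
  have h0 : ¬ CanContain (wheelRay m) d 0 ({none} : Set (Option (ℕ × ZMod m))) := by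
    rintro ⟨T, pos, -, -, hcont⟩
    have hprot : ∀ t n (i : ZMod m), n < T + 1 → some (n, i) ∉ protOf pos t := by
      rintro t n i - ⟨s, -, j, -⟩
      exact j.elim0
    have hmem := burnt_lower (protOf pos) (T + 1) hprot T (by omega) 0
    have := burnt_rank (protOf pos) T _ (hcont (T + 1) hmem)
    simp [rk] at this
  -- conclude
  have hne : Set.Nonempty {k | CanContain (wheelRay m) d k ({none} : Set (Option (ℕ × ZMod m)))} :=
    ⟨1, h1⟩
  refine le_antisymm (Nat.sInf_le h1) ?_
  refine Nat.one_le_iff_ne_zero.mpr ?_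
  intro hzero
  unfold fdNum at hzero
  have hmem := Nat.sInf_mem hne
  rw [hzero] at hmem
  exact h0 hmem

end Firefight
end
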